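/- Let p be a natural number, let U ⊆ ℝᵖ be a convex open set, let L_a : ℝ → ℝ (a = 1, …, k) and C_α : ℝ → ℝ (α = 1, …, P) be smooth functions, let n^a ∈ ℝᵖ, μ_α ∈ ℝ, η^α ∈ ℝᵖ, c_α ∈ ℝ be constants, and let f : U → ℝ be a smooth function satisfying Σ_{α=1}^{P} μ_α C_α(μ_α f(q) + ⟨η^α, q⟩ + c_α) = 0 for all q ∈ U. Define F̄_{ji}(v) = Σ_{a=1}^{k} n^a_j n^a_i L_a(⟨n^a, v⟩) and Ḡ_j(q) = Σ_{α=1}^{P} η^α_j C_α(μ_α f(q) + ⟨η^α, q⟩ + c_α). Then there exists a smooth function Ē : U × ℝᵖ → ℝ such that for all q ∈ U and all v, w ∈ ℝᵖ: Σ_{j=1}^{p} [ Σ_{i=1}^{p} F̄_{ji}(v) w^i + Ḡ_j(q) ] v^j = Σ_{j=1}^{p} (∂Ē/∂q^j)(q,v) v^j + Σ_{j=1}^{p} (∂Ē/∂v^j)(q,v) w^j. -/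

import Mathlib

lemma antideriv_hasDerivAt (g : ℝ → ℝ) (hg : Continuous g) (x : ℝ) :
    HasDerivAt (fun y => ∫ t in (0:ℝ)..y, g t) (g x) x :=
  intervalIntegral.integral_hasDerivAt_right (hg.intervalIntegrable 0 x)
    (hg.stronglyMeasurableAtFilter _ _) hg.continuousAt

lemma antideriv_smooth (g : ℝ → ℝ) (hg : ContDiff ℝ (⊤ : ℕ∞) g) :
    ContDiff ℝ (⊤ : ℕ∞) (fun y => ∫ t in (0:ℝ)..y, g t) := by
  rw [contDiff_infty_iff_deriv]
  refine ⟨fun x => (antideriv_hasDerivAt g hg.continuous x).differentiableAt, ?_⟩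
  have : deriv (fun y => ∫ t in (0:ℝ)..y, g t) = g := by
    funext x; exact (antideriv_hasDerivAt g hg.continuous x).deriv
  rw [this]; exact hg



/-- Existence of a smooth energy function Ē for the reduced Birkhoffian of an RLC network
with a pure capacitor loop: with F̄_{ji}(v) = Σ_a n^a_j n^a_i L_a(⟨n^a,v⟩) and
Ḡ_j(q) = Σ_α η^α_j C_α(μ_α f(q) + ⟨η^α,q⟩ + c_α), there is Ē smooth on U × ℝᵖ with
Σ_j [Σ_i F̄_{ji}(v) w^i + Ḡ_j(q)] v^j = Σ_j ∂Ē/∂q^j v^j + Σ_j ∂Ē/∂v^j w^j. -/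
theorem reduced_birkhoffian_energy (p k P : ℕ)
    (U : Set (Fin p → ℝ)) (hUo : IsOpen U) (hUc : Convex ℝ U)
    (L : Fin k → ℝ → ℝ) (hL : ∀ a, ContDiff ℝ (⊤ : ℕ∞) (L a))
    (C : Fin P → ℝ → ℝ) (hC : ∀ α, ContDiff ℝ (⊤ : ℕ∞) (C α))
    (n : Fin k → Fin p → ℝ) (μ : Fin P → ℝ) (η : Fin P → Fin p → ℝ) (c : Fin P → ℝ)
    (f : (Fin p → ℝ) → ℝ) (hf : ContDiffOn ℝ (⊤ : ℕ∞) f U)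
    (hcon : ∀ q ∈ U, ∑ α, μ α * C α (μ α * f q + (∑ i, η α i * q i) + c α) = 0) :
    ∃ E : (Fin p → ℝ) × (Fin p → ℝ) → ℝ,
      ContDiffOn ℝ (⊤ : ℕ∞) E (U ×ˢ (Set.univ : Set (Fin p → ℝ))) ∧
      ∀ q ∈ U, ∀ v w : Fin p → ℝ,
        ∑ j, ((∑ i, (∑ a, n a j * n a i * L a (∑ s, n a s * v s)) * w i)
              + ∑ α, η α j * C α (μ α * f q + (∑ i, η α i * q i) + c α)) * v j
        = ∑ j, (fderiv ℝ E (q, v) (Pi.single j 1, 0)) * v j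
          + ∑ j, (fderiv ℝ E (q, v) (0, Pi.single j 1)) * w j := by
  classical
  -- antiderivatives
  set A : Fin k → ℝ → ℝ := fun a s => ∫ t in (0:ℝ)..s, t * L a t with hA
  set B : Fin P → ℝ → ℝ := fun α s => ∫ t in (0:ℝ)..s, C α t with hB
  have hAsm : ∀ a, ContDiff ℝ (⊤ : ℕ∞) (A a) :=
    fun a => antideriv_smooth _ (contDiff_id.mul (hL a))
  have hAder : ∀ a x, HasDerivAt (A a) (x * L a x) x :=
    fun a x => antideriv_hasDerivAt _ (continuous_id.mul (hL a).continuous) x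
  have hBsm : ∀ α, ContDiff ℝ (⊤ : ℕ∞) (B α) :=
    fun α => antideriv_smooth _ (hC α)
  have hBder : ∀ α x, HasDerivAt (B α) (C α x) x :=
    fun α x => antideriv_hasDerivAt _ (hC α).continuous x
  -- the energy function
  refine ⟨fun z => (∑ α, B α (μ α * f z.1 + (∑ i, η α i * z.1 i) + c α))
      + (∑ a, A a (∑ i, n a i * z.2 i)), ?_, ?_⟩
  · -- smoothness
    apply ContDiffOn.add
    · apply ContDiffOn.sum
      intro α _
      apply (hBsm α).comp_contDiffOn
      apply ContDiffOn.add
      apply ContDiffOn.add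
      · exact ContDiffOn.const_smul (μ α)
          (hf.comp contDiff_fst.contDiffOn (fun z hz => hz.1))
      · exact (ContDiff.contDiffOn (by
          apply ContDiff.sum; intro i _
          exact contDiff_const.mul ((contDiff_apply ℝ ℝ i).comp contDiff_fst)))
      · exact contDiffOn_const
    · apply ContDiff.contDiffOn
      apply ContDiff.sum
      intro a _
      apply (hAsm a).comp
      apply ContDiff.sum; intro i _
      exact contDiff_const.mul ((contDiff_apply ℝ ℝ i).comp contDiff_snd)
  · -- the identity
    intro q hq v w
    have hfd : DifferentiableAt ℝ f q :=
      (hf.contDiffAt (hUo.mem_nhds hq)).differentiableAt (by simp)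
    set F' : (Fin p → ℝ) →L[ℝ] ℝ := fderiv ℝ f q with hF'
    set fst' := ContinuousLinearMap.fst ℝ (Fin p → ℝ) (Fin p → ℝ) with hfst
    set snd' := ContinuousLinearMap.snd ℝ (Fin p → ℝ) (Fin p → ℝ) with hsnd
    set ℓ : (Fin p → ℝ) → (Fin p → ℝ) →L[ℝ] ℝ :=
      fun x => ∑ i, x i • ContinuousLinearMap.proj i with hℓ
    have hℓap : ∀ x h, ℓ x h = ∑ i, x i * h i := by
      intro x h
      simp [hℓ, ContinuousLinearMap.sum_apply]
    set u : Fin P → ℝ := fun α => μ α * f q + (∑ i, η α i * q i) + c α with hu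
    set s : Fin k → ℝ := fun a => ∑ i, n a i * v i with hs
    set D : ((Fin p → ℝ) × (Fin p → ℝ)) →L[ℝ] ℝ :=
      (∑ α, C α (u α) • ((μ α • F' + ℓ (η α)).comp fst'))
      + (∑ a, (s a * L a (s a)) • ((ℓ (n a)).comp snd')) with hD
    have hDfd : HasFDerivAt (fun z : (Fin p → ℝ) × (Fin p → ℝ) =>
        (∑ α, B α (μ α * f z.1 + (∑ i, η α i * z.1 i) + c α))
        + (∑ a, A a (∑ i, n a i * z.2 i))) D (q, v) := by
      apply HasFDerivAt.add
      · apply HasFDerivAt.fun_sum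
        intro α _
        have hinner : HasFDerivAt (fun z : (Fin p → ℝ) × (Fin p → ℝ) =>
            μ α * f z.1 + (∑ i, η α i * z.1 i) + c α)
            ((μ α • F' + ℓ (η α)).comp fst') (q, v) := by
          have h1 : HasFDerivAt (fun z : (Fin p → ℝ) × (Fin p → ℝ) => f z.1)
              (F'.comp fst') (q, v) := hfd.hasFDerivAt.comp (q, v) fst'.hasFDerivAt
          have h2 : HasFDerivAt (fun z : (Fin p → ℝ) × (Fin p → ℝ) =>
              ∑ i, η α i * z.1 i) ((ℓ (η α)).comp fst') (q, v) := by
            have := ((ℓ (η α)).comp fst').hasFDerivAt (x := (q, v))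
            apply this.congr_of_eventuallyEq
            filter_upwards with z
            simp [hℓap, hfst]
          have h3 := (h1.const_mul (μ α)).add h2
          have heq : (μ α • F' + ℓ (η α)).comp fst'
              = μ α • F'.comp fst' + (ℓ (η α)).comp fst' := by
            ext z <;> simp
          rw [heq]
          exact h3.add_const (c α)
        exact (hBder α (u α)).comp_hasFDerivAt (q, v) hinner
      · apply HasFDerivAt.fun_sum
        intro a _
        have hinner : HasFDerivAt (fun z : (Fin p → ℝ) × (Fin p → ℝ) =>
            ∑ i, n a i * z.2 i) ((ℓ (n a)).comp snd') (q, v) := by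
          have := ((ℓ (n a)).comp snd').hasFDerivAt (x := (q, v))
          apply this.congr_of_eventuallyEq
          filter_upwards with z
          simp [hℓap, hsnd]
        exact (hAder a (s a)).comp_hasFDerivAt (q, v) hinner
    rw [hDfd.fderiv]
    -- evaluate D
    have hDq : ∀ j, D (Pi.single j 1, (0 : Fin p → ℝ))
        = ∑ α, C α (u α) * (μ α * F' (Pi.single j 1) + η α j) := by
      intro j
      simp only [hD, ContinuousLinearMap.add_apply, ContinuousLinearMap.sum_apply,
        ContinuousLinearMap.smul_apply, ContinuousLinearMap.comp_apply,
        ContinuousLinearMap.coe_fst', ContinuousLinearMap.coe_snd']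
      simp [hℓap, hfst, hsnd, Pi.single_apply, mul_ite, smul_eq_mul]
    have hDv : ∀ j, D ((0 : Fin p → ℝ), Pi.single j 1)
        = ∑ a, (s a * L a (s a)) * n a j := by
      intro j
      simp only [hD, ContinuousLinearMap.add_apply, ContinuousLinearMap.sum_apply,
        ContinuousLinearMap.smul_apply, ContinuousLinearMap.comp_apply,
        ContinuousLinearMap.coe_fst', ContinuousLinearMap.coe_snd']
      simp [hℓap, hfst, hsnd, Pi.single_apply, mul_ite, smul_eq_mul]
    simp only [hDq, hDv]
    -- algebra
    have hzero : (∑ α, μ α * C α (u α)) = 0 := hcon q hq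
    have key : ∑ j, (∑ α, C α (u α) * (μ α * F' (Pi.single j 1) + η α j)) * v j
        = (∑ α, μ α * C α (u α)) * (∑ j, v j * F' (Pi.single j 1))
          + ∑ α, C α (u α) * (∑ j, η α j * v j) := by
      simp only [Finset.sum_mul, Finset.mul_sum]
      rw [Finset.sum_comm]
      conv_rhs => rw [Finset.sum_comm]
      rw [← Finset.sum_add_distrib]
      refine Finset.sum_congr rfl fun α _ => ?_
      rw [← Finset.sum_add_distrib]
      refine Finset.sum_congr rfl fun j _ => ?_
      ring
    have key2 : ∑ j, (∑ a, s a * L a (s a) * n a j) * w j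
        = ∑ a, L a (s a) * s a * (∑ i, n a i * w i) := by
      simp only [Finset.sum_mul, Finset.mul_sum]
      rw [Finset.sum_comm]
      exact Finset.sum_congr rfl fun a _ => Finset.sum_congr rfl fun j _ => by ring
    rw [key, hzero, zero_mul, zero_add, key2]
    have h2 : ∑ j, (∑ α, η α j * C α (u α)) * v j
        = ∑ α, C α (u α) * (∑ j, η α j * v j) := by
      simp only [Finset.sum_mul, Finset.mul_sum]
      rw [Finset.sum_comm]
      exact Finset.sum_congr rfl fun α _ => Finset.sum_congr rfl fun j _ => by ring
    have step : ∀ j, (∑ i, (∑ a, n a j * n a i * L a (s a)) * w i) * v j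
        = ∑ a, ∑ i, (n a j * v j) * (L a (s a) * (n a i * w i)) := by
      intro j
      simp only [Finset.sum_mul]
      rw [Finset.sum_comm]
      exact Finset.sum_congr rfl fun a _ => Finset.sum_congr rfl fun i _ => by ring
    have h1 : ∑ j, (∑ i, (∑ a, n a j * n a i * L a (s a)) * w i) * v j
        = ∑ a, L a (s a) * s a * (∑ i, n a i * w i) := by
      rw [Finset.sum_congr rfl (fun j _ => step j), Finset.sum_comm]
      refine Finset.sum_congr rfl fun a _ => ?_
      have hsa : (∑ j, n a j * v j) = s a := rfl
      calc ∑ j, ∑ i, (n a j * v j) * (L a (s a) * (n a i * w i))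
          = ∑ j, (n a j * v j) * (L a (s a) * ∑ i, n a i * w i) := by
            refine Finset.sum_congr rfl fun j _ => ?_
            simp only [Finset.mul_sum]
        _ = (∑ j, n a j * v j) * (L a (s a) * ∑ i, n a i * w i) := by
            rw [Finset.sum_mul]
        _ = L a (s a) * s a * (∑ i, n a i * w i) := by rw [hsa]; ring
    simp only [add_mul, Finset.sum_add_distrib]
    rw [h1, h2, add_comm]
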